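/- Let R be a commutative ring and M a finite free R-module of rank n. Let Ψ : M → M* = Hom_R(M, R) be an R-module isomorphism, and let M₁ ⊆ M₂ ⊆ M be submodules such that M₁ is free of rank A, M/M₂ is free of rank A, M/M₁ is free, and M₁ and M₂ are perpendicular under Ψ, i.e. Ψ(m₁)(m₂) = 0 and Ψ(m₂)(m₁) = 0 for all m₁ ∈ M₁ and m₂ ∈ M₂. Then the map Ψ' : M/M₂ → M₁* = Hom_R(M₁, R) given by Ψ'(m + M₂) = Ψ(m)|_{M₁} is a well-defined R-module isomorphism; in particular M/M₂ ≅ M₁* and, dually, M₁ and M/M₂ are dual to each other. -/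

import Mathlib

/-- Let `R` be a commutative ring, `M` a finite free `R`-module of rank
`n`, `Ψ : M ≃ M*` an isomorphism, and `M₁ ⊆ M₂ ⊆ M` submodules with `M₁` free of rank `A`,
`M/M₂` free of rank `A`, `M/M₁` free, and `M₁ ⊥ M₂` under `Ψ`.  Then the map
`Ψ' : M/M₂ → M₁*`, `Ψ'(m + M₂) = Ψ(m)|_{M₁}`, is a well-defined `R`-module isomorphism;
in particular `M/M₂ ≅ M₁*`, so `M₁` and `M/M₂` are dual to each other. -/
theorem quotient_iso_dual_of_perp
    (R : Type*) [CommRing R]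
    (M : Type*) [AddCommGroup M] [Module R M]
    [Module.Free R M] [Module.Finite R M]
    (n A : ℕ) (hn : Module.finrank R M = n)
    (Ψ : M ≃ₗ[R] Module.Dual R M)
    (M₁ M₂ : Submodule R M) (h12 : M₁ ≤ M₂)
    (hM₁free : Module.Free R M₁) (hM₁rank : Module.finrank R M₁ = A)
    (hQ₂free : Module.Free R (M ⧸ M₂)) (hQ₂rank : Module.finrank R (M ⧸ M₂) = A)
    (hQ₁free : Module.Free R (M ⧸ M₁))
    (hperp : ∀ m₁ ∈ M₁, ∀ m₂ ∈ M₂, Ψ m₁ m₂ = 0 ∧ Ψ m₂ m₁ = 0) :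
    ∃ Ψ' : (M ⧸ M₂) →ₗ[R] Module.Dual R M₁,
      (∀ (m : M) (x : M₁), Ψ' (Submodule.Quotient.mk m) x = Ψ m (x : M)) ∧
      Function.Bijective Ψ' := by
  classical
  -- the map m ↦ (Ψ m)|_{M₁}
  set f : M →ₗ[R] Module.Dual R M₁ :=
    (M₁.subtype.dualMap) ∘ₗ Ψ.toLinearMap with hf
  have hker : M₂ ≤ LinearMap.ker f := by
    intro m hm
    simp only [LinearMap.mem_ker]
    ext x
    exact (hperp x x.2 m hm).2
  refine ⟨M₂.liftQ f hker, fun m x => rfl, ?_⟩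
  -- a retraction r : M →ₗ M₁ with r ∘ subtype = id, from freeness of M ⧸ M₁
  obtain ⟨s, hs⟩ := Module.projective_lifting_property M₁.mkQ LinearMap.id
    M₁.mkQ_surjective
  have hres : ∀ m : M, m - s (M₁.mkQ m) ∈ M₁ := by
    intro m
    have h1 := congrArg (fun g => g (M₁.mkQ m)) hs
    simp only [LinearMap.comp_apply, LinearMap.id_apply] at h1
    have h2 : M₁.mkQ (m - s (M₁.mkQ m)) = 0 := by rw [map_sub, h1, sub_self]
    exact (Submodule.Quotient.mk_eq_zero M₁).1 (by simpa using h2)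
  set r : M →ₗ[R] M₁ :=
    (LinearMap.id - s ∘ₗ M₁.mkQ).codRestrict M₁ (fun m => hres m) with hr
  have hrsub : ∀ x : M₁, r (x : M) = x := by
    intro x
    have h0 : (Submodule.Quotient.mk (x : M) : M ⧸ M₁) = 0 :=
      (Submodule.Quotient.mk_eq_zero M₁).2 x.2
    ext
    simp [hr, LinearMap.codRestrict, Submodule.mkQ_apply, h0]
  -- M₁ is finite
  have hM₁fin : Module.Finite R M₁ :=
    Module.Finite.of_surjective r (fun x => ⟨x, hrsub x⟩)
  -- f is surjective
  have hfsurj : Function.Surjective f := by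
    intro φ
    obtain ⟨m, hm⟩ := Ψ.surjective (φ ∘ₗ r)
    refine ⟨m, ?_⟩
    ext x
    simp only [hf, LinearMap.comp_apply, LinearMap.dualMap_apply,
      Submodule.coe_subtype, LinearEquiv.coe_coe, hm]
    simp [hrsub x]
  have hsurj : Function.Surjective (M₂.liftQ f hker) := by
    intro φ
    obtain ⟨m, hm⟩ := hfsurj φ
    exact ⟨Submodule.Quotient.mk m, hm⟩
  refine ⟨?_, hsurj⟩
  -- injectivity: surjection between free modules of the same finite rank
  by_cases hR : Subsingleton R
  · have : Subsingleton M := Module.subsingleton R M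
    have : Subsingleton (M ⧸ M₂) := Quotient.instSubsingletonQuotient _
    intro a b _
    exact Subsingleton.elim a b
  · have : Nontrivial R := not_subsingleton_iff_nontrivial.1 hR
    have hDualFree : Module.Free R (Module.Dual R M₁) := inferInstance
    have hDualFin : Module.Finite R (Module.Dual R M₁) := inferInstance
    have e₁ : M₁ ≃ₗ[R] Module.Dual R M₁ :=
      (Module.Free.chooseBasis R M₁).toDualEquiv
    have hDualRank : Module.finrank R (Module.Dual R M₁) = A := by
      rw [← e₁.finrank_eq, hM₁rank]
    let b₁ : Module.Basis (Fin A) R (M ⧸ M₂) := Module.finBasisOfFinrankEq R _ hQ₂rank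
    let b₂ : Module.Basis (Fin A) R (Module.Dual R M₁) :=
      Module.finBasisOfFinrankEq R _ hDualRank
    let e : Module.Dual R M₁ ≃ₗ[R] (M ⧸ M₂) := b₂.equiv b₁ (Equiv.refl _)
    have hg : Function.Surjective
        (e.toLinearMap ∘ₗ M₂.liftQ f hker : (M ⧸ M₂) →ₗ[R] (M ⧸ M₂)) :=
      e.surjective.comp hsurj
    have hinj := OrzechProperty.injective_of_surjective_endomorphism _ hg
    intro a b hab
    exact hinj (by simp [LinearMap.comp_apply, hab])
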